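/- Let a be a letter such that every letter appearing in a word x is ≥ a. Then in the stylic monoid, axa = xa. -/

import Mathlib

noncomputable section

open FreeMonoid

/-- The defining relations of the stylic congruence: the Knuth (plactic)
relations together with the idempotent relations `a² ≡ a`. -/
inductive StylicRel (A : Type*) [LinearOrder A] : FreeMonoid A → FreeMonoid A → Prop
  | knuth1 {a b c : A} : a < b → b < c →
      StylicRel A (ofList [b, a, c]) (ofList [b, c, a])
  | knuth2 {a b c : A} : a < b → b < c →
      StylicRel A (ofList [a, c, b]) (ofList [c, a, b])
  | knuth3 {a b : A} : a < b →
      StylicRel A (ofList [b, a, b]) (ofList [b, b, a])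
  | knuth4 {a b : A} : a < b →
      StylicRel A (ofList [a, b, a]) (ofList [b, a, a])
  | idem (a : A) : StylicRel A (ofList [a, a]) (ofList [a])

/-- The stylic congruence on the free monoid `A*`. -/
def stylCon (A : Type*) [LinearOrder A] : Con (FreeMonoid A) := conGen (StylicRel A)

/-- The stylic monoid `Styl(A)`. -/
abbrev Styl (A : Type*) [LinearOrder A] := (stylCon A).Quotient


lemma styl_of {A : Type*} [LinearOrder A] {x y : FreeMonoid A} (h : StylicRel A x y) :
    stylCon A x y := ConGen.Rel.of _ _ h

lemma ofList_mul {A : Type*} (l m : List A) :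
    ofList l * ofList m = ofList (l ++ m) := rfl

lemma styl_rel_axa {A : Type*} [LinearOrder A] (a : A) (x : List A)
    (h : ∀ b ∈ x, a ≤ b) :
    stylCon A (ofList ([a] ++ x ++ [a])) (ofList (x ++ [a])) := by
  induction x with
  | nil => exact styl_of (StylicRel.idem a)
  | cons b z ih =>
    have hab : a ≤ b := h b List.mem_cons_self
    have ih' := ih (fun c hc => h c (List.mem_cons_of_mem _ hc))
    rcases eq_or_lt_of_le hab with heq | hlt
    · subst heq
      have := (stylCon A).mul (styl_of (StylicRel.idem a))
        ((stylCon A).refl (ofList (z ++ [a])))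
      simpa [ofList_mul, mul_assoc] using this
    · have s1 : stylCon A (ofList ([a] ++ (b :: z) ++ [a]))
          (ofList ([a, b] ++ ([a] ++ z ++ [a]))) := by
        have := (stylCon A).mul ((stylCon A).refl (ofList [a, b])) ((stylCon A).symm ih')
        simpa [ofList_mul, mul_assoc] using this
      have s2 : stylCon A (ofList ([a, b] ++ ([a] ++ z ++ [a])))
          (ofList ([b, a, a] ++ (z ++ [a]))) := by
        have := (stylCon A).mul (styl_of (StylicRel.knuth4 hlt))
          ((stylCon A).refl (ofList (z ++ [a])))
        simpa [ofList_mul, mul_assoc] using this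
      have s3 : stylCon A (ofList ([b, a, a] ++ (z ++ [a])))
          (ofList ([b] ++ ([a] ++ z ++ [a]))) := by
        have := (stylCon A).mul ((stylCon A).mul ((stylCon A).refl (ofList [b]))
          (styl_of (StylicRel.idem a))) ((stylCon A).refl (ofList (z ++ [a])))
        simpa [ofList_mul, mul_assoc] using this
      have s4 : stylCon A (ofList ([b] ++ ([a] ++ z ++ [a])))
          (ofList ((b :: z) ++ [a])) := by
        have := (stylCon A).mul ((stylCon A).refl (ofList [b])) ih'
        simpa [ofList_mul, mul_assoc] using this
      exact ((s1.trans s2).trans s3).trans s4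

/-- Lemma `axa` (i): if every letter of `x` is `≥ a`,
then `a x a = x a` in the stylic monoid. -/
theorem styl_axa {A : Type*} [LinearOrder A] (a : A) (x : List A)
    (h : ∀ b ∈ x, a ≤ b) :
    (stylCon A).mk' (ofList ([a] ++ x ++ [a])) =
      (stylCon A).mk' (ofList (x ++ [a])) := by
  exact (Con.eq _).mpr (styl_rel_axa a x h)
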